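/- Let S ∈ ℝ^{K×K} be irreducible with nonnegative entries and have support, with normal form and edge sets ℰ^⊲, ℰ^≺ on {1,…,L} as in the context. Then the directed graph ({1,…,L}, ℰ^⊲ ∪ ℰ^≺) contains at least one cycle, every cycle contains at least one edge of ℰ^≺ ∖ ℰ^⊲, and consequently κ := min over all cycles γ of ⟨γ⟩/|γ| is well defined and satisfies 0 < κ ≤ 1, where |γ| is the number of edges of γ and ⟨γ⟩ is the number of edges of γ lying in ℰ^≺ ∖ ℰ^⊲. -/

import Mathlib

open Matrix Filter Topology

/-- The normalized average `⟨x⟩ = (1/d) ∑ i, x i` of a vector. -/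
noncomputable def avg {d : ℕ} (x : Fin d → ℝ) : ℝ := (∑ i, x i) / d

/-- The Dyson equation (at `η = 0`) with parameter `τ > 0` for an entrywise positive pair
`(v, w)` with `Sw`, `Sᵗv` entrywise positive: `1/v = Sw + τ/(Sᵗv)`, `1/w = Sᵗv + τ/(Sw)`. -/
def DysonSol {K : ℕ} (S : Matrix (Fin K) (Fin K) ℝ) (τ : ℝ) (v w : Fin K → ℝ) : Prop :=
  (∀ i, 0 < v i) ∧ (∀ i, 0 < w i) ∧
  (∀ i, 0 < S.mulVec w i) ∧ (∀ i, 0 < Sᵀ.mulVec v i) ∧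
  (∀ i, 1 / v i = S.mulVec w i + τ / Sᵀ.mulVec v i) ∧
  (∀ i, 1 / w i = Sᵀ.mulVec v i + τ / S.mulVec w i)

/-- The permuted matrix `S̃ = Q₁ S Q₂ᵗ`, where `Q₁, Q₂` are the permutation matrices of
`σ₁, σ₂`; entrywise `S̃ i j = S (σ₁ i) (σ₂ j)`. -/
def tildeS {K : ℕ} (S : Matrix (Fin K) (Fin K) ℝ) (σ₁ σ₂ : Equiv.Perm (Fin K)) :
    Matrix (Fin K) (Fin K) ℝ :=
  Matrix.of fun i j => S (σ₁ i) (σ₂ j)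

/-- The normalized average of `x` over the block `{i : blk i = k}`. -/
noncomputable def blockAvg {K L : ℕ} (blk : Fin K → Fin L) (x : Fin K → ℝ) (k : Fin L) : ℝ :=
  (∑ i ∈ Finset.univ.filter (fun i => blk i = k), x i) /
    (Finset.univ.filter (fun i => blk i = k)).card

/-- The edge relation `l ⊲ k`: the off-diagonal block `S̃_{lk}` is nonzero. -/
def edgeA {K L : ℕ} (S : Matrix (Fin K) (Fin K) ℝ) (σ₁ σ₂ : Equiv.Perm (Fin K))
    (blk : Fin K → Fin L) (l k : Fin L) : Prop :=
  l ≠ k ∧ ∃ i j, blk i = l ∧ blk j = k ∧ tildeS S σ₁ σ₂ i j ≠ 0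

/-- The edge relation `l ≺ k`: the block `Q_{lk}` of `Q = Q₁Q₂ᵗ` is nonzero, i.e. there are
`i, j` in blocks `l, k` with `σ₁ i = σ₂ j`. -/
def edgeP {K L : ℕ} (σ₁ σ₂ : Equiv.Perm (Fin K)) (blk : Fin K → Fin L) (l k : Fin L) : Prop :=
  ∃ i j, blk i = l ∧ blk j = k ∧ σ₁ i = σ₂ j

/-- The normal form data: `blk` is a monotone surjective assignment of the `K` indices to `L`
consecutive blocks, `S̃ = Q₁ S Q₂ᵗ` is block upper triangular with positive main diagonal,
and each diagonal block `S̃_ll` is fully indecomposable. -/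
def IsNormalForm {K L : ℕ} (S : Matrix (Fin K) (Fin K) ℝ) (σ₁ σ₂ : Equiv.Perm (Fin K))
    (blk : Fin K → Fin L) : Prop :=
  Monotone blk ∧ Function.Surjective blk ∧
  (∀ i j, tildeS S σ₁ σ₂ i j ≠ 0 → blk i ≤ blk j) ∧
  (∀ i, 0 < tildeS S σ₁ σ₂ i i) ∧
  (∀ l : Fin L, ∀ I J : Finset (Fin K), (∀ i ∈ I, blk i = l) → (∀ j ∈ J, blk j = l) →
    (Finset.univ.filter (fun i => blk i = l)).card ≤ I.card + J.card →
    ∃ i ∈ I, ∃ j ∈ J, tildeS S σ₁ σ₂ i j ≠ 0)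

/-- A cycle of length `ℓ ≥ 1` in the directed graph with edge relation `E`. -/
def IsCycle {L : ℕ} (E : Fin L → Fin L → Prop) (ℓ : ℕ) (γ : ℕ → Fin L) : Prop :=
  1 ≤ ℓ ∧ γ ℓ = γ 0 ∧ ∀ t < ℓ, E (γ t) (γ (t + 1))

open scoped Classical in
/-- `⟨γ⟩`: the number of edges of the path `γ` (of length `ℓ`) lying in `ℰ^≺ ∖ ℰ^⊲`. -/
noncomputable def precCount {L : ℕ} (Ea Ep : Fin L → Fin L → Prop) (ℓ : ℕ)
    (γ : ℕ → Fin L) : ℕ :=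
  ((Finset.range ℓ).filter fun t =>
    Ep (γ t) (γ (t + 1)) ∧ ¬ Ea (γ t) (γ (t + 1))).card

/-- The set of ratios `⟨γ⟩/|γ|` over all cycles `γ` of the graph with edges `ℰ^⊲ ∪ ℰ^≺`. -/
def ratioSet {L : ℕ} (Ea Ep : Fin L → Fin L → Prop) : Set ℝ :=
  {r | ∃ (ℓ : ℕ) (γ : ℕ → Fin L),
    IsCycle (fun a b => Ea a b ∨ Ep a b) ℓ γ ∧ r = (precCount Ea Ep ℓ γ : ℝ) / ℓ}

section AuxCycles

variable {L : ℕ} (Ea Ep : Fin L → Fin L → Prop)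

private lemma aux_mediant {p₁ p₂ l₁ l₂ : ℝ} (h₁ : 0 < l₁) (h₂ : 0 < l₂)
    (h : p₁ / l₁ ≤ p₂ / l₂) : p₁ / l₁ ≤ (p₁ + p₂) / (l₁ + l₂) := by
  rw [div_le_div_iff₀ h₁ h₂] at h
  rw [div_le_div_iff₀ h₁ (by linarith)]
  nlinarith

open scoped Classical in
private lemma precCount_eq_sum (ℓ : ℕ) (γ : ℕ → Fin L) :
    precCount Ea Ep ℓ γ =
      ∑ t ∈ Finset.range ℓ,
        if Ep (γ t) (γ (t + 1)) ∧ ¬ Ea (γ t) (γ (t + 1)) then 1 else 0 := by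
  rw [precCount, Finset.card_filter]

private lemma exists_repeat {γ : ℕ → Fin L} : ∃ a b : ℕ, a < b ∧ b ≤ L ∧ γ a = γ b := by
  have hni : ¬ Function.Injective (fun t : Fin (L + 1) => γ t) := by
    intro hinj
    have := Fintype.card_le_of_injective _ hinj
    simp [Fintype.card_fin] at this
  rw [Function.not_injective_iff] at hni
  obtain ⟨x, y, hxy, hne⟩ := hni
  rcases Ne.lt_or_gt hne with h | h
  · exact ⟨x, y, h, Nat.lt_succ_iff.mp y.isLt, hxy⟩
  · exact ⟨y, x, h, Nat.lt_succ_iff.mp x.isLt, hxy.symm⟩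

private lemma exists_cycle (hL : 1 ≤ L) (f : Fin L → Fin L) (hf : ∀ l, Ep l (f l)) :
    ∃ ℓ γ, IsCycle (fun x y => Ea x y ∨ Ep x y) ℓ γ := by
  have hne : Nonempty (Fin L) := ⟨⟨0, hL⟩⟩
  obtain ⟨x₀⟩ := hne
  set γ : ℕ → Fin L := fun t => f^[t] x₀ with hγ
  obtain ⟨a, b, hab, hbL, hgg⟩ := exists_repeat (γ := γ)
  refine ⟨b - a, fun t => γ (a + t), by omega, ?_, ?_⟩
  · show γ (a + (b - a)) = γ (a + 0)
    rw [Nat.add_sub_cancel' (le_of_lt hab), Nat.add_zero, hgg]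
  · intro t ht
    right
    have h1 : γ (a + (t + 1)) = f (γ (a + t)) := by
      rw [show a + (t + 1) = (a + t) + 1 by omega]
      simp [hγ, Function.iterate_succ_apply']
    show Ep (γ (a + t)) (γ (a + (t + 1)))
    rw [h1]
    exact hf _

private lemma cycle_down (hlt : ∀ x y, Ea x y → x < y) {ℓ : ℕ} {γ : ℕ → Fin L}
    (hc : IsCycle (fun x y => Ea x y ∨ Ep x y) ℓ γ) :
    ∃ t < ℓ, Ep (γ t) (γ (t + 1)) ∧ ¬ Ea (γ t) (γ (t + 1)) := by
  obtain ⟨hl1, hl0, hstep⟩ := hc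
  by_contra hcon
  push_neg at hcon
  have hEa : ∀ t < ℓ, Ea (γ t) (γ (t + 1)) := by
    intro t ht
    rcases hstep t ht with h | h
    · exact h
    · exact hcon t ht h
  have hmono : ∀ s, s ≤ ℓ → s ≠ 0 → γ 0 < γ s := by
    intro s
    induction s with
    | zero => simp
    | succ n ih =>
      intro hs _
      have hn : n < ℓ := by omega
      have hstep' := hlt _ _ (hEa n hn)
      rcases Nat.eq_zero_or_pos n with h0 | h0
      · rw [h0] at hstep' ⊢; exact hstep'
      · exact lt_trans (ih (by omega) (by omega)) hstep'
  have := hmono ℓ le_rfl (by omega)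
  rw [hl0] at this
  exact lt_irrefl _ this

open scoped Classical in
private lemma split_cycle {ℓ a b : ℕ} {γ : ℕ → Fin L}
    (hc : IsCycle (fun x y => Ea x y ∨ Ep x y) ℓ γ) (hab : a < b) (hbl : b < ℓ)
    (hgg : γ a = γ b) :
    IsCycle (fun x y => Ea x y ∨ Ep x y) (b - a) (fun t => γ (a + t)) ∧
    IsCycle (fun x y => Ea x y ∨ Ep x y) (ℓ - (b - a))
      (fun t => if t < a then γ t else γ (t + (b - a))) ∧
    precCount Ea Ep ℓ γ
      = precCount Ea Ep (b - a) (fun t => γ (a + t))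
      + precCount Ea Ep (ℓ - (b - a)) (fun t => if t < a then γ t else γ (t + (b - a))) := by
  obtain ⟨hl1, hl0, hstep⟩ := hc
  set m := b - a with hm
  have hb : a + m = b := by omega
  -- key pointwise description of the second path's edges
  have key : ∀ t : ℕ, t < ℓ - m →
      (if t < a then γ t else γ (t + m)) = γ (if t < a then t else t + m) ∧
      (if t + 1 < a then γ (t + 1) else γ (t + 1 + m))
        = γ ((if t < a then t else t + m) + 1) := by
    intro t ht
    by_cases hta : t < a
    · refine ⟨by simp [hta], ?_⟩
      rw [if_pos hta]
      by_cases h1 : t + 1 < a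
      · rw [if_pos h1]
      · have heq : t + 1 = a := by omega
        rw [if_neg h1, heq, hb, ← hgg]
    · refine ⟨by simp [hta], ?_⟩
      have h1 : ¬ (t + 1 < a) := by omega
      rw [if_neg h1, if_neg hta]
      congr 1
      omega
  have hsval : ∀ t : ℕ, t < ℓ - m → (if t < a then t else t + m) < ℓ := by
    intro t ht
    by_cases hta : t < a
    · simp only [if_pos hta]; omega
    · simp only [if_neg hta]; omega
  refine ⟨⟨by omega, ?_, ?_⟩, ⟨by omega, ?_, ?_⟩, ?_⟩
  · show γ (a + m) = γ (a + 0)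
    rw [hb, Nat.add_zero, hgg]
  · intro t ht
    show (fun x y => Ea x y ∨ Ep x y) (γ (a + t)) (γ (a + (t + 1)))
    rw [show a + (t + 1) = (a + t) + 1 by omega]
    exact hstep (a + t) (by omega)
  · -- second path is a cycle: endpoints
    show (if ℓ - m < a then γ (ℓ - m) else γ (ℓ - m + m))
        = (if 0 < a then γ 0 else γ (0 + m))
    have h1 : ¬ (ℓ - m < a) := by omega
    rw [if_neg h1, show ℓ - m + m = ℓ by omega, hl0]
    by_cases ha : 0 < a
    · rw [if_pos ha]
    · have ha0 : a = 0 := by omega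
      rw [if_neg ha, Nat.zero_add, show m = b from by omega, ← hgg, ha0]
  · intro t ht
    obtain ⟨h1, h2⟩ := key t ht
    show (fun x y => Ea x y ∨ Ep x y) (if t < a then γ t else γ (t + m))
        (if t + 1 < a then γ (t + 1) else γ (t + 1 + m))
    rw [h1, h2]
    exact hstep _ (hsval t ht)
  · -- count additivity
    set F : ℕ → ℕ := fun t =>
      if Ep (γ t) (γ (t + 1)) ∧ ¬ Ea (γ t) (γ (t + 1)) then 1 else 0 with hF
    have c0 : precCount Ea Ep ℓ γ = ∑ t ∈ Finset.range ℓ, F t :=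
      precCount_eq_sum Ea Ep ℓ γ
    have c1 : precCount Ea Ep m (fun t => γ (a + t))
        = ∑ t ∈ Finset.range m, F (a + t) := by
      rw [precCount_eq_sum]
      refine Finset.sum_congr rfl ?_
      intro t _
      simp only [hF]
      rw [show a + (t + 1) = (a + t) + 1 by omega]
    have c2 : precCount Ea Ep (ℓ - m) (fun t => if t < a then γ t else γ (t + m))
        = ∑ t ∈ Finset.range (ℓ - m), F (if t < a then t else t + m) := by
      rw [precCount_eq_sum]
      refine Finset.sum_congr rfl ?_
      intro t ht
      rw [Finset.mem_range] at ht
      obtain ⟨h1, h2⟩ := key t ht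
      simp only [hF]
      rw [h1, h2]
    rw [c0, c1, c2]
    have e1 : ∑ t ∈ Finset.range m, F (a + t) = ∑ t ∈ Finset.Ico a b, F t := by
      rw [Finset.sum_Ico_eq_sum_range]
    have e2 : ∑ t ∈ Finset.range (ℓ - m), F (if t < a then t else t + m)
        = ∑ t ∈ Finset.range a, F t + ∑ t ∈ Finset.Ico b ℓ, F t := by
      rw [Finset.range_eq_Ico, ← Finset.sum_Ico_consecutive _ (Nat.zero_le a) (by omega : a ≤ ℓ - m)]
      congr 1
      · refine Finset.sum_congr (by rw [Finset.range_eq_Ico]) ?_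
        intro t ht
        rw [Finset.range_eq_Ico, Finset.mem_Ico] at ht
        rw [if_pos ht.2]
      · rw [Finset.sum_Ico_eq_sum_range, Finset.sum_Ico_eq_sum_range]
        refine Finset.sum_congr (by rw [show ℓ - m - a = ℓ - b from by omega]) ?_
        intro t _
        rw [if_neg (by omega : ¬ (a + t < a))]
        congr 1
        omega
    rw [e1, e2]
    rw [Finset.range_eq_Ico,
      ← Finset.sum_Ico_consecutive F (Nat.zero_le a) (le_of_lt (lt_trans hab hbl)),
      ← Finset.sum_Ico_consecutive F (le_of_lt hab) (le_of_lt hbl)]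
    rw [Finset.range_eq_Ico]
    ring

open scoped Classical in
private lemma reduce_cycle (hL : 1 ≤ L) :
    ∀ ℓ : ℕ, ∀ γ : ℕ → Fin L, IsCycle (fun x y => Ea x y ∨ Ep x y) ℓ γ →
      ∃ ℓ' γ', IsCycle (fun x y => Ea x y ∨ Ep x y) ℓ' γ' ∧ ℓ' ≤ L ∧
        (precCount Ea Ep ℓ' γ' : ℝ) / ℓ' ≤ (precCount Ea Ep ℓ γ : ℝ) / ℓ := by
  intro ℓ
  induction ℓ using Nat.strong_induction_on with
  | _ ℓ IH =>
    intro γ hc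
    by_cases hlen : ℓ ≤ L
    · exact ⟨ℓ, γ, hc, hlen, le_refl _⟩
    · push_neg at hlen
      obtain ⟨a, b, hab, hbL, hgg⟩ := exists_repeat (γ := γ)
      have hbl : b < ℓ := lt_of_le_of_lt hbL hlen
      obtain ⟨hc1, hc2, hcount⟩ := split_cycle Ea Ep ⟨hc.1, hc.2.1, hc.2.2⟩ hab hbl hgg
      set m := b - a with hm
      set δ₁ : ℕ → Fin L := fun t => γ (a + t) with hδ₁
      set δ₂ : ℕ → Fin L := fun t => if t < a then γ t else γ (t + m) with hδ₂
      set p₁ := precCount Ea Ep m δ₁ with hp₁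
      set p₂ := precCount Ea Ep (ℓ - m) δ₂ with hp₂
      have hm1 : 1 ≤ m := by omega
      have hl2 : 1 ≤ ℓ - m := by omega
      have hmr : (0:ℝ) < m := by exact_mod_cast hm1
      have hl2r : (0:ℝ) < (ℓ - m : ℕ) := by exact_mod_cast hl2
      have hsum : (precCount Ea Ep ℓ γ : ℝ) = (p₁ : ℝ) + (p₂ : ℝ) := by
        exact_mod_cast congrArg (Nat.cast (R := ℝ)) hcount
      have hlsum : (ℓ : ℝ) = (m : ℝ) + ((ℓ - m : ℕ) : ℝ) := by
        have : m + (ℓ - m) = ℓ := by omega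
        exact_mod_cast (congrArg (Nat.cast (R := ℝ)) this).symm
      rcases le_total ((p₁ : ℝ) / m) ((p₂ : ℝ) / (ℓ - m : ℕ)) with hle | hle
      · refine ⟨m, δ₁, hc1, by omega, ?_⟩
        rw [hsum, hlsum]
        exact aux_mediant hmr hl2r hle
      · obtain ⟨ℓ', γ', hc', hle', hratio⟩ := IH (ℓ - m) (by omega) δ₂ hc2
        refine ⟨ℓ', γ', hc', hle', ?_⟩
        refine le_trans hratio ?_
        rw [hsum, hlsum]
        have := aux_mediant hl2r hmr hle
        calc (p₂ : ℝ) / (ℓ - m : ℕ) ≤ ((p₂ : ℝ) + p₁) / (((ℓ - m : ℕ) : ℝ) + m) := this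
        _ = ((p₁ : ℝ) + p₂) / ((m : ℝ) + ((ℓ - m : ℕ) : ℝ)) := by ring_nf
      
end AuxCycles

/-- Let `S` be irreducible nonnegative with support, with normal form and
edge sets `ℰ^⊲`, `ℰ^≺` on `{1,…,L}`. Then the graph `({1,…,L}, ℰ^⊲ ∪ ℰ^≺)` contains a cycle,
every cycle contains an edge of `ℰ^≺ ∖ ℰ^⊲`, and `κ := min_γ ⟨γ⟩/|γ|` over all cycles `γ` is
well defined with `0 < κ ≤ 1`. -/
theorem stmt_11 (K L : ℕ) (hK : 1 ≤ K) (hL : 1 ≤ L)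
    (S : Matrix (Fin K) (Fin K) ℝ)
    (hS : ∀ i j, 0 ≤ S i j)
    (hirr : ∀ i j, ∃ m : ℕ, 1 ≤ m ∧ 0 < (S ^ m) i j)
    (hsupp : ∃ π : Equiv.Perm (Fin K), ∀ i, 0 < S i (π i))
    (σ₁ σ₂ : Equiv.Perm (Fin K)) (blk : Fin K → Fin L)
    (hnf : IsNormalForm S σ₁ σ₂ blk) :
    (∃ (ℓ : ℕ) (γ : ℕ → Fin L),
        IsCycle (fun a b => edgeA S σ₁ σ₂ blk a b ∨ edgeP σ₁ σ₂ blk a b) ℓ γ) ∧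
    (∀ (ℓ : ℕ) (γ : ℕ → Fin L),
        IsCycle (fun a b => edgeA S σ₁ σ₂ blk a b ∨ edgeP σ₁ σ₂ blk a b) ℓ γ →
        ∃ t < ℓ, edgeP σ₁ σ₂ blk (γ t) (γ (t + 1)) ∧ ¬ edgeA S σ₁ σ₂ blk (γ t) (γ (t + 1))) ∧
    ∃ κ : ℝ, IsLeast (ratioSet (edgeA S σ₁ σ₂ blk) (edgeP σ₁ σ₂ blk)) κ ∧ 0 < κ ∧ κ ≤ 1 := by
  classical
  obtain ⟨hmono, hsurj, htri, hdiag, hfi⟩ := hnf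
  have hlt : ∀ x y, edgeA S σ₁ σ₂ blk x y → x < y := by
    rintro x y ⟨hne, i, j, hi, hj, hSij⟩
    exact lt_of_le_of_ne (hi ▸ hj ▸ htri i j hSij) hne
  have hfex : ∀ l : Fin L, ∃ k, edgeP σ₁ σ₂ blk l k := by
    intro l
    obtain ⟨i, hi⟩ := hsurj l
    exact ⟨blk (σ₂⁻¹ (σ₁ i)), i, σ₂⁻¹ (σ₁ i), hi, rfl, by simp⟩
  choose f hfe using hfex
  have hex := exists_cycle (edgeA S σ₁ σ₂ blk) (edgeP σ₁ σ₂ blk) hL f hfe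
  have hdown : ∀ (ℓ : ℕ) (γ : ℕ → Fin L),
      IsCycle (fun a b => edgeA S σ₁ σ₂ blk a b ∨ edgeP σ₁ σ₂ blk a b) ℓ γ →
      ∃ t < ℓ, edgeP σ₁ σ₂ blk (γ t) (γ (t + 1)) ∧
        ¬ edgeA S σ₁ σ₂ blk (γ t) (γ (t + 1)) :=
    fun ℓ γ hc => cycle_down (edgeA S σ₁ σ₂ blk) (edgeP σ₁ σ₂ blk) hlt hc
  refine ⟨hex, hdown, ?_⟩
  set Ea := edgeA S σ₁ σ₂ blk with hEa
  set Ep := edgeP σ₁ σ₂ blk with hEp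
  have hpc_pos : ∀ (ℓ : ℕ) (γ : ℕ → Fin L),
      IsCycle (fun a b => Ea a b ∨ Ep a b) ℓ γ → 0 < precCount Ea Ep ℓ γ := by
    intro ℓ γ hc
    obtain ⟨t, ht, h1, h2⟩ := hdown ℓ γ hc
    rw [precCount_eq_sum]
    have htm : t ∈ Finset.range ℓ := Finset.mem_range.mpr ht
    have hpos : 0 < (if Ep (γ t) (γ (t + 1)) ∧ ¬ Ea (γ t) (γ (t + 1)) then 1 else 0 : ℕ) := by
      rw [if_pos ⟨h1, h2⟩]
      exact Nat.one_pos
    have hle := Finset.single_le_sum (f := fun t' : ℕ =>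
      if Ep (γ t') (γ (t' + 1)) ∧ ¬ Ea (γ t') (γ (t' + 1)) then 1 else 0)
      (fun i _ => Nat.zero_le _) htm
    exact lt_of_lt_of_le hpos hle
  have hpc_le : ∀ (ℓ : ℕ) (γ : ℕ → Fin L), precCount Ea Ep ℓ γ ≤ ℓ := by
    intro ℓ γ
    rw [precCount_eq_sum]
    calc ∑ t ∈ Finset.range ℓ, (if Ep (γ t) (γ (t + 1)) ∧ ¬ Ea (γ t) (γ (t + 1)) then 1 else 0)
        ≤ ∑ _t ∈ Finset.range ℓ, 1 :=
          Finset.sum_le_sum (fun t _ => by split <;> omega)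
    _ = ℓ := by simp
  set A : Set ℝ := {r | ∃ ℓ γ, IsCycle (fun a b => Ea a b ∨ Ep a b) ℓ γ ∧ ℓ ≤ L ∧
    r = (precCount Ea Ep ℓ γ : ℝ) / ℓ} with hA
  have hAsub : A ⊆ ratioSet Ea Ep := by
    rintro r ⟨ℓ, γ, hc, _, hr⟩
    exact ⟨ℓ, γ, hc, hr⟩
  have hAfin : A.Finite := by
    apply Set.Finite.subset (Set.Finite.image (fun q : ℕ × ℕ => (q.1 : ℝ) / q.2)
      ((Set.finite_Iic L).prod (Set.finite_Iic L)))
    rintro r ⟨ℓ, γ, hc, hle, hr⟩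
    exact ⟨(precCount Ea Ep ℓ γ, ℓ), ⟨le_trans (hpc_le ℓ γ) hle, hle⟩, hr.symm⟩
  have hAne : A.Nonempty := by
    obtain ⟨ℓ, γ, hc⟩ := hex
    obtain ⟨ℓ', γ', hc', hle', _⟩ := reduce_cycle Ea Ep hL ℓ γ hc
    exact ⟨_, ℓ', γ', hc', hle', rfl⟩
  have hAne' : hAfin.toFinset.Nonempty := by
    rwa [Set.Finite.toFinset_nonempty]
  set κ := hAfin.toFinset.min' hAne' with hκ
  have hκA : κ ∈ A := by
    have := hAfin.toFinset.min'_mem hAne'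
    rwa [Set.Finite.mem_toFinset] at this
  have hκle : ∀ r ∈ A, κ ≤ r := fun r hr =>
    Finset.min'_le _ r ((Set.Finite.mem_toFinset hAfin).mpr hr)
  refine ⟨κ, ⟨hAsub hκA, ?_⟩, ?_, ?_⟩
  · rintro r ⟨ℓ, γ, hc, hr⟩
    obtain ⟨ℓ', γ', hc', hle', hratio⟩ := reduce_cycle Ea Ep hL ℓ γ hc
    refine le_trans (hκle _ ⟨ℓ', γ', hc', hle', rfl⟩) ?_
    rw [hr]
    exact hratio
  · obtain ⟨ℓ, γ, hc, _, hr⟩ := hκA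
    rw [hr]
    exact div_pos (by exact_mod_cast hpc_pos ℓ γ hc) (by exact_mod_cast hc.1)
  · obtain ⟨ℓ, γ, hc, _, hr⟩ := hκA
    rw [hr]
    apply div_le_one_of_le₀
    · exact_mod_cast hpc_le ℓ γ
    · positivity
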